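/- arXiv:1801.09608 — 5 statements merged into one kernel-verified Lean document; each statement's English description precedes it below -/
import Mathlib

section
/- Define the $N\times N$ matrix $F(\boldsymbol\sigma', a, \boldsymbol\sigma)$ with entries $F_{lj} = \prod_{k\ne l} \frac{\sin\pi((a+1)/N + \sigma'^{(j)} - \sigma^{(k)})}{\sin\pi(\sigma^{(k)} - \sigma^{(l)})}$, assuming the denominators are nonzero. Then $F(\boldsymbol\sigma', a, \boldsymbol\sigma)\, F(-\boldsymbol\sigma, a, -\boldsymbol\sigma') = I$, i.e. $F^{-1}(\boldsymbol\sigma',a,\boldsymbol\sigma) = F(-\boldsymbol\sigma, a, -\boldsymbol\sigma')$. -/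
open Complex Finset Polynomial


/-- The fusion matrix `F(σ', a, σ)` with entries
`F_{lj} = ∏_{k ≠ l} sin π((a+1)/N + σ'_j - σ_k) / sin π(σ_k - σ_l)`. -/
noncomputable def Fmat {N : ℕ} (σ' : Fin N → ℂ) (a : ℂ) (σ : Fin N → ℂ) :
    Matrix (Fin N) (Fin N) ℂ :=
  Matrix.of fun l j =>
    ∏ k ∈ Finset.univ.erase l,
      Complex.sin ((Real.pi : ℂ) * ((a + 1) / N + σ' j - σ k)) /
        Complex.sin ((Real.pi : ℂ) * (σ k - σ l))


private lemma sinPiSub (x y : ℂ) :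
    Complex.sin ((Real.pi : ℂ) * (x - y)) =
      (Complex.exp (2 * Real.pi * I * x) - Complex.exp (2 * Real.pi * I * y)) *
        Complex.exp (-(Real.pi * I * (x + y))) / (2 * I) := by
  rw [Complex.sin, sub_mul, sub_mul, ← Complex.exp_add, ← Complex.exp_add]
  rw [show 2 * (Real.pi:ℂ) * I * x + -(Real.pi * I * (x + y)) = (Real.pi:ℂ) * (x - y) * I by ring,
      show 2 * (Real.pi:ℂ) * I * y + -(Real.pi * I * (x + y)) = -((Real.pi:ℂ) * (x - y)) * I by ring]
  have : (I:ℂ) ≠ 0 := I_ne_zero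
  field_simp
  ring_nf
  rw [I_sq]
  ring

private lemma lagrange_eval {N : ℕ} (z : Fin N → ℂ) (hz : Function.Injective z)
    (Q : ℂ[X]) (hQ : Q.degree < N) (u : ℂ) :
    ∑ j, Q.eval (z j) * ∏ k ∈ Finset.univ.erase j, (u - z k) / (z j - z k) = Q.eval u := by
  have hinj : Set.InjOn z ↑(Finset.univ : Finset (Fin N)) := hz.injOn
  have h := Lagrange.eq_interpolate (f := Q) hinj (by simpa using hQ)
  conv_rhs => rw [h]
  rw [Lagrange.interpolate_apply, eval_finset_sum]
  refine Finset.sum_congr rfl fun j _ => ?_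
  rw [eval_mul, eval_C, Lagrange.basis, eval_prod]
  congr 1
  refine Finset.prod_congr rfl fun k hk => ?_
  rw [Lagrange.basisDivisor, eval_mul, eval_C, eval_sub, eval_X, eval_C]
  rw [div_eq_inv_mul]

private lemma sin_ratio (x y p q : ℂ) (h : Complex.sin ((Real.pi : ℂ) * (p - q)) ≠ 0) :
    Complex.sin ((Real.pi : ℂ) * (x - y)) / Complex.sin ((Real.pi : ℂ) * (p - q)) =
      (Complex.exp (2 * Real.pi * I * x) - Complex.exp (2 * Real.pi * I * y)) /
        (Complex.exp (2 * Real.pi * I * p) - Complex.exp (2 * Real.pi * I * q)) *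
        Complex.exp (Real.pi * I * (p + q - x - y)) := by
  have hd : Complex.exp (2 * Real.pi * I * p) - Complex.exp (2 * Real.pi * I * q) ≠ 0 := by
    intro h0
    apply h
    rw [sinPiSub, h0, zero_mul, zero_div]
  have hE : Complex.exp (-(Real.pi * I * (x + y)))
      = Complex.exp (Real.pi * I * (p + q - x - y)) * Complex.exp (-(Real.pi * I * (p + q))) := by
    rw [← Complex.exp_add]
    congr 1
    ring
  rw [sinPiSub, sinPiSub, hE]
  have h2I : (2 : ℂ) * I ≠ 0 := by simp [I_ne_zero]
  have he1 := Complex.exp_ne_zero (-(Real.pi * I * (p + q)) : ℂ)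
  field_simp

private lemma main_calc {N : ℕ} (z w : Fin N → ℂ) (hz : Function.Injective z)
    (l m : Fin N) :
    ∑ j, (∏ k ∈ Finset.univ.erase l, (z j - w k) / (w k - w l)) *
        (∏ k ∈ Finset.univ.erase j, (z k - w m) / (z j - z k))
      = (-1 : ℂ) ^ (N - 1) * ∏ k ∈ Finset.univ.erase l, (w m - w k) / (w k - w l) := by
  classical
  have hN : 0 < N := l.pos
  set Q : ℂ[X] := ∏ k ∈ Finset.univ.erase l, (X - C (w k)) with hQdef
  have hQeval : ∀ t : ℂ, Q.eval t = ∏ k ∈ Finset.univ.erase l, (t - w k) := by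
    intro t; simp [hQdef, eval_prod]
  have hcard : ∀ i : Fin N, (Finset.univ.erase i).card = N - 1 := by
    intro i
    rw [Finset.card_erase_of_mem (Finset.mem_univ i), Finset.card_univ, Fintype.card_fin]
  have hdeg : Q.degree < N := by
    have : Q.degree = ((N - 1 : ℕ) : WithBot ℕ) := by
      rw [hQdef, Polynomial.degree_prod]
      simp [Polynomial.degree_X_sub_C, hcard l]
    rw [this]
    exact_mod_cast Nat.sub_lt hN one_pos
  calc
    ∑ j, (∏ k ∈ Finset.univ.erase l, (z j - w k) / (w k - w l)) *
        (∏ k ∈ Finset.univ.erase j, (z k - w m) / (z j - z k))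
      = ∑ j, ((-1 : ℂ) ^ (N - 1) * ∏ k ∈ Finset.univ.erase l, (w k - w l)⁻¹) *
          (Q.eval (z j) * ∏ k ∈ Finset.univ.erase j, (w m - z k) / (z j - z k)) := by
        refine Finset.sum_congr rfl fun j _ => ?_
        have h1 : ∏ k ∈ Finset.univ.erase l, (z j - w k) / (w k - w l)
            = Q.eval (z j) * ∏ k ∈ Finset.univ.erase l, (w k - w l)⁻¹ := by
          rw [hQeval, Finset.prod_div_distrib, div_eq_mul_inv, ← Finset.prod_inv_distrib]
        have h2 : ∏ k ∈ Finset.univ.erase j, (z k - w m) / (z j - z k)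
            = (-1 : ℂ) ^ (N - 1) * ∏ k ∈ Finset.univ.erase j, (w m - z k) / (z j - z k) := by
          rw [← hcard j, ← Finset.prod_const (-1 : ℂ), ← Finset.prod_mul_distrib]
          refine Finset.prod_congr rfl fun k _ => ?_
          rw [neg_one_mul, ← neg_div, neg_sub]
        rw [h1, h2]; ring
    _ = ((-1 : ℂ) ^ (N - 1) * ∏ k ∈ Finset.univ.erase l, (w k - w l)⁻¹) *
          ∑ j, Q.eval (z j) * ∏ k ∈ Finset.univ.erase j, (w m - z k) / (z j - z k) := by
        rw [Finset.mul_sum]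
    _ = ((-1 : ℂ) ^ (N - 1) * ∏ k ∈ Finset.univ.erase l, (w k - w l)⁻¹) * Q.eval (w m) := by
        rw [lagrange_eval z hz Q hdeg (w m)]
    _ = (-1 : ℂ) ^ (N - 1) * ∏ k ∈ Finset.univ.erase l, (w m - w k) / (w k - w l) := by
        rw [hQeval, Finset.prod_div_distrib, div_eq_mul_inv, ← Finset.prod_inv_distrib]
        ring

/-- `F(σ', a, σ) F(-σ, a, -σ') = I`, i.e. `F⁻¹(σ',a,σ) = F(-σ,a,-σ')`. -/
theorem stmt6 {N : ℕ} (σ' σ : Fin N → ℂ) (a : ℂ)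
    (hσ : ∀ k l : Fin N, k ≠ l → Complex.sin ((Real.pi : ℂ) * (σ k - σ l)) ≠ 0)
    (hσ' : ∀ k l : Fin N, k ≠ l → Complex.sin ((Real.pi : ℂ) * (σ' k - σ' l)) ≠ 0) :
    Fmat σ' a σ * Fmat (-σ) a (-σ') = 1 := by
  classical
  ext l m
  rw [Matrix.mul_apply, Matrix.one_apply]
  simp only [Fmat, Matrix.of_apply, Pi.neg_apply]
  set z : Fin N → ℂ := fun j => Complex.exp (2 * Real.pi * I * ((a + 1) / N + σ' j)) with hzdef
  set w : Fin N → ℂ := fun k => Complex.exp (2 * Real.pi * I * (σ k)) with hwdef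
  have hcard : ∀ i : Fin N, (Finset.univ.erase i).card = N - 1 := by
    intro i
    rw [Finset.card_erase_of_mem (Finset.mem_univ i), Finset.card_univ, Fintype.card_fin]
  have hzinj : Function.Injective z := by
    intro j k hjk
    by_contra hne
    apply hσ' j k hne
    have harg : (Real.pi : ℂ) * (σ' j - σ' k)
        = Real.pi * (((a + 1) / N + σ' j) - ((a + 1) / N + σ' k)) := by ring
    rw [harg, sinPiSub]
    simp only [hzdef] at hjk
    rw [show Complex.exp (2 * Real.pi * I * ((a + 1) / N + σ' j))
        = Complex.exp (2 * Real.pi * I * ((a + 1) / N + σ' k)) from hjk]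
    rw [sub_self, zero_mul, zero_div]
  have hw : ∀ k : Fin N, k ≠ l → w k - w l ≠ 0 := by
    intro k hk h0
    apply hσ k l hk
    rw [sinPiSub]
    rw [show Complex.exp (2 * Real.pi * I * σ k) - Complex.exp (2 * Real.pi * I * σ l) = 0 from h0]
    rw [zero_mul, zero_div]
  have hterm : ∀ j : Fin N,
      (∏ k ∈ Finset.univ.erase l,
        Complex.sin ((Real.pi : ℂ) * ((a + 1) / N + σ' j - σ k)) /
          Complex.sin ((Real.pi : ℂ) * (σ k - σ l))) *
      (∏ k ∈ Finset.univ.erase j,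
        Complex.sin ((Real.pi : ℂ) * ((a + 1) / N + -σ m - -σ' k)) /
          Complex.sin ((Real.pi : ℂ) * (-σ' k - -σ' j)))
      = Complex.exp (Real.pi * I * (σ l - σ m)) ^ (N - 1) *
        ((∏ k ∈ Finset.univ.erase l, (z j - w k) / (w k - w l)) *
         (∏ k ∈ Finset.univ.erase j, (z k - w m) / (z j - z k))) := by
    intro j
    have key1 : ∀ k ∈ Finset.univ.erase l,
        Complex.sin ((Real.pi : ℂ) * ((a + 1) / N + σ' j - σ k)) /
          Complex.sin ((Real.pi : ℂ) * (σ k - σ l))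
        = (z j - w k) / (w k - w l) *
            Complex.exp (Real.pi * I * (σ l - (a + 1) / N - σ' j)) := by
      intro k hk
      have hkl : k ≠ l := (Finset.mem_erase.mp hk).1
      have harg : (Real.pi : ℂ) * ((a + 1) / N + σ' j - σ k)
          = Real.pi * (((a + 1) / N + σ' j) - σ k) := by ring
      rw [harg, sin_ratio _ _ _ _ (hσ k l hkl)]
      congr 2
      ring
    have key2 : ∀ k ∈ Finset.univ.erase j,
        Complex.sin ((Real.pi : ℂ) * ((a + 1) / N + -σ m - -σ' k)) /
          Complex.sin ((Real.pi : ℂ) * (-σ' k - -σ' j))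
        = (z k - w m) / (z j - z k) *
            Complex.exp (Real.pi * I * ((a + 1) / N + σ' j - σ m)) := by
      intro k hk
      have hkj : j ≠ k := fun h => (Finset.mem_erase.mp hk).1 h.symm
      have e1 : (Real.pi : ℂ) * ((a + 1) / N + -σ m - -σ' k)
          = Real.pi * (((a + 1) / N + σ' k) - σ m) := by ring
      have e2 : (Real.pi : ℂ) * (-σ' k - -σ' j)
          = Real.pi * (((a + 1) / N + σ' j) - ((a + 1) / N + σ' k)) := by ring
      have hden : Complex.sin ((Real.pi : ℂ) *
          (((a + 1) / N + σ' j) - ((a + 1) / N + σ' k))) ≠ 0 := by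
        have harg : (Real.pi : ℂ) * (((a + 1) / N + σ' j) - ((a + 1) / N + σ' k))
            = Real.pi * (σ' j - σ' k) := by ring
        rw [harg]
        exact hσ' j k hkj
      rw [e1, e2, sin_ratio _ _ _ _ hden]
      congr 2
      ring
    rw [Finset.prod_congr rfl key1, Finset.prod_congr rfl key2,
        Finset.prod_mul_distrib, Finset.prod_mul_distrib,
        Finset.prod_const, Finset.prod_const, hcard, hcard]
    rw [show ((∏ k ∈ Finset.univ.erase l, (z j - w k) / (w k - w l)) *
          Complex.exp (Real.pi * I * (σ l - (a + 1) / N - σ' j)) ^ (N - 1)) *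
        ((∏ k ∈ Finset.univ.erase j, (z k - w m) / (z j - z k)) *
          Complex.exp (Real.pi * I * ((a + 1) / N + σ' j - σ m)) ^ (N - 1))
        = (Complex.exp (Real.pi * I * (σ l - (a + 1) / N - σ' j)) *
            Complex.exp (Real.pi * I * ((a + 1) / N + σ' j - σ m))) ^ (N - 1) *
          ((∏ k ∈ Finset.univ.erase l, (z j - w k) / (w k - w l)) *
           (∏ k ∈ Finset.univ.erase j, (z k - w m) / (z j - z k))) from by
      rw [mul_pow]; ring]
    rw [← Complex.exp_add]
    congr 3
    ring
  rw [Finset.sum_congr rfl fun j _ => hterm j, ← Finset.mul_sum,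
      main_calc z w hzinj l m]
  by_cases hlm : l = m
  · subst hlm
    rw [if_pos rfl]
    have hprod : ∏ k ∈ Finset.univ.erase l, (w l - w k) / (w k - w l) = (-1 : ℂ) ^ (N - 1) := by
      rw [← hcard l, ← Finset.prod_const (-1 : ℂ)]
      refine Finset.prod_congr rfl fun k hk => ?_
      have hkl : k ≠ l := (Finset.mem_erase.mp hk).1
      rw [← neg_sub (w k) (w l), neg_div, div_self (hw k hkl)]
    rw [hprod, sub_self, mul_zero, Complex.exp_zero, one_pow, one_mul, ← pow_add]
    exact Even.neg_one_pow ⟨N - 1, by ring⟩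
  · rw [if_neg hlm]
    have hm : m ∈ Finset.univ.erase l := Finset.mem_erase.mpr ⟨fun h => hlm h.symm, Finset.mem_univ m⟩
    rw [Finset.prod_eq_zero hm (by rw [sub_self, zero_div]), mul_zero, mul_zero]
end

section
/- With $F(\boldsymbol\sigma',a,\boldsymbol\sigma)$ as above and $\boldsymbol h_m\in\mathbb{C}^N$ the vector with components $h_m^{(k)}=\delta_{mk}-1/N$, and $D_m$ the diagonal matrix with $(D_m)_{kk}=(-1)^{\delta_{km}}$, one has $F(\boldsymbol\sigma', a, \boldsymbol\sigma + \boldsymbol h_m) = D_m^{N-1} F(\boldsymbol\sigma', a+1, \boldsymbol\sigma)$ and $F(\boldsymbol\sigma', a, \boldsymbol\sigma - \boldsymbol h_m) = D_m^{N-1} F(\boldsymbol\sigma', a-1, \boldsymbol\sigma)$. -/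
/-- Weight vector `h_m` of the first fundamental representation of `sl_N`:
components `δ_{mk} - 1/N`. -/
noncomputable def hvec (N : ℕ) (m : Fin N) : Fin N → ℂ :=
  fun k => (if k = m then 1 else 0) - 1 / N

/-- Sign matrix `D_m` with `(D_m)_{kk} = (-1)^{δ_{km}}`. -/
noncomputable def Dmat {N : ℕ} (m : Fin N) : Matrix (Fin N) (Fin N) ℂ :=
  Matrix.diagonal fun k => if k = m then -1 else 1

lemma sin_pm (x s : ℂ) (hs : s = 1 ∨ s = -1) :
    Complex.sin (x + s * Real.pi) = -Complex.sin x := by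
  rcases hs with h | h <;> subst h <;>
    simp [Complex.sin_add, ← Complex.ofReal_sin, ← Complex.ofReal_cos]

lemma master {N : ℕ} (σ' σ : Fin N → ℂ) (a s : ℂ) (m : Fin N)
    (hs : s = 1 ∨ s = -1) :
    Fmat σ' a (fun k => σ k + s * ((if k = m then 1 else 0) - 1 / N)) =
      Dmat m ^ (N - 1) * Fmat σ' (a + s) σ := by
  have hs' : -s = 1 ∨ -s = -1 := by rcases hs with h | h <;> simp [h]
  ext l j
  rw [Dmat, Matrix.diagonal_pow, Matrix.diagonal_mul]
  simp only [Fmat, Matrix.of_apply, Pi.pow_apply]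
  have key : ∀ k ∈ Finset.univ.erase l,
      Complex.sin ((Real.pi : ℂ) * ((a + 1) / N + σ' j -
          (σ k + s * ((if k = m then 1 else 0) - 1 / N)))) /
        Complex.sin ((Real.pi : ℂ) * ((σ k + s * ((if k = m then 1 else 0) - 1 / N)) -
          (σ l + s * ((if l = m then 1 else 0) - 1 / N)))) =
      (if l = m then (-1 : ℂ) else 1) *
        (Complex.sin ((Real.pi : ℂ) * ((a + s + 1) / N + σ' j - σ k)) /
          Complex.sin ((Real.pi : ℂ) * (σ k - σ l))) := by
    intro k hk
    have hkl : k ≠ l := Finset.ne_of_mem_erase hk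
    by_cases hkm : k = m <;> by_cases hlm : l = m
    · exact absurd (hkm.trans hlm.symm) hkl
    · -- k = m, l ≠ m : both numerator and denominator flip sign
      simp only [hkm, hlm, if_true, if_false]
      have e1 : (Real.pi : ℂ) * ((a + 1) / N + σ' j - (σ m + s * (1 - 1 / N))) =
          (Real.pi : ℂ) * ((a + s + 1) / N + σ' j - σ m) + (-s) * Real.pi := by ring
      have e2 : (Real.pi : ℂ) * ((σ m + s * (1 - 1 / N)) - (σ l + s * (0 - 1 / N))) =
          (Real.pi : ℂ) * (σ m - σ l) + s * Real.pi := by ring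
      rw [e1, e2, sin_pm _ _ hs', sin_pm _ _ hs, neg_div_neg_eq, one_mul]
    · -- k ≠ m, l = m : only denominator flips sign
      simp only [hkm, hlm, if_true, if_false]
      have e1 : (Real.pi : ℂ) * ((a + 1) / N + σ' j - (σ k + s * (0 - 1 / N))) =
          (Real.pi : ℂ) * ((a + s + 1) / N + σ' j - σ k) := by ring
      have e2 : (Real.pi : ℂ) * ((σ k + s * (0 - 1 / N)) - (σ m + s * (1 - 1 / N))) =
          (Real.pi : ℂ) * (σ k - σ m) + (-s) * Real.pi := by ring
      rw [e1, e2, sin_pm _ _ hs', div_neg, neg_one_mul]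
    · -- neither
      simp only [hkm, hlm, if_true, if_false]
      have e1 : (Real.pi : ℂ) * ((a + 1) / N + σ' j - (σ k + s * (0 - 1 / N))) =
          (Real.pi : ℂ) * ((a + s + 1) / N + σ' j - σ k) := by ring
      have e2 : (Real.pi : ℂ) * ((σ k + s * (0 - 1 / N)) - (σ l + s * (0 - 1 / N))) =
          (Real.pi : ℂ) * (σ k - σ l) := by ring
      rw [e1, e2, one_mul]
  rw [Finset.prod_congr rfl key, Finset.prod_mul_distrib, Finset.prod_const,
    Finset.card_erase_of_mem (Finset.mem_univ l), Finset.card_univ, Fintype.card_fin]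

/-- shift identities in the third argument:
`F(σ', a, σ ± h_m) = D_m^{N-1} F(σ', a ± 1, σ)`. -/
theorem stmt7 {N : ℕ} (σ' σ : Fin N → ℂ) (a : ℂ) (m : Fin N)
    (hσ : ∀ k l : Fin N, k ≠ l → Complex.sin ((Real.pi : ℂ) * (σ k - σ l)) ≠ 0)
    (hσp : ∀ k l : Fin N, k ≠ l →
      Complex.sin ((Real.pi : ℂ) * ((σ + hvec N m) k - (σ + hvec N m) l)) ≠ 0)
    (hσm : ∀ k l : Fin N, k ≠ l →
      Complex.sin ((Real.pi : ℂ) * ((σ - hvec N m) k - (σ - hvec N m) l)) ≠ 0) :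
    Fmat σ' a (σ + hvec N m) = Dmat m ^ (N - 1) * Fmat σ' (a + 1) σ ∧
      Fmat σ' a (σ - hvec N m) = Dmat m ^ (N - 1) * Fmat σ' (a - 1) σ := by
  constructor
  · have h := master σ' σ a 1 m (Or.inl rfl)
    rw [show (fun k => σ k + 1 * ((if k = m then (1:ℂ) else 0) - 1 / N)) = σ + hvec N m
      from funext fun k => by simp [hvec]] at h
    exact h
  · have h := master σ' σ a (-1) m (Or.inr rfl)
    rw [show (fun k => σ k + (-1) * ((if k = m then (1:ℂ) else 0) - 1 / N)) = σ - hvec N m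
      from funext fun k => by simp [hvec]; ring] at h
    rw [show a + (-1) = a - 1 from by ring] at h
    exact h
end

section
/- With $F$, $\boldsymbol h_m$, $D_m$ as above, one has $F(\boldsymbol\sigma' + \boldsymbol h_m, a, \boldsymbol\sigma) = F(\boldsymbol\sigma', a-1, \boldsymbol\sigma) D_m^{N-1}$ and $F(\boldsymbol\sigma' - \boldsymbol h_m, a, \boldsymbol\sigma) = F(\boldsymbol\sigma', a+1, \boldsymbol\sigma) D_m^{N-1}$. -/
lemma prod_neg_div {ι : Type*} (s : Finset ι) (f g : ι → ℂ) :
    ∏ k ∈ s, (-f k) / g k = (-1) ^ s.card * ∏ k ∈ s, f k / g k := by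
  calc ∏ k ∈ s, (-f k) / g k = ∏ k ∈ s, (-1) * (f k / g k) := by
        apply Finset.prod_congr rfl; intro k _; rw [neg_div]; ring
    _ = (∏ _k ∈ s, (-1 : ℂ)) * ∏ k ∈ s, f k / g k := Finset.prod_mul_distrib
    _ = (-1) ^ s.card * ∏ k ∈ s, f k / g k := by rw [Finset.prod_const]

/-- shift identities in the first argument:
`F(σ' ± h_m, a, σ) = F(σ', a ∓ 1, σ) D_m^{N-1}`. -/
theorem stmt8 {N : ℕ} (σ' σ : Fin N → ℂ) (a : ℂ) (m : Fin N)
    (hσ : ∀ k l : Fin N, k ≠ l → Complex.sin ((Real.pi : ℂ) * (σ k - σ l)) ≠ 0) :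
    Fmat (σ' + hvec N m) a σ = Fmat σ' (a - 1) σ * Dmat m ^ (N - 1) ∧
      Fmat (σ' - hvec N m) a σ = Fmat σ' (a + 1) σ * Dmat m ^ (N - 1) := by
  have hD : (Dmat m : Matrix (Fin N) (Fin N) ℂ) ^ (N - 1)
      = Matrix.diagonal (fun k => if k = m then (-1 : ℂ) ^ (N - 1) else 1) := by
    have hfun : ((fun k => if k = m then (-1 : ℂ) else 1) ^ (N - 1))
        = fun k => if k = m then (-1 : ℂ) ^ (N - 1) else 1 := by
      funext k; by_cases h : k = m <;> simp [h]
    rw [Dmat, Matrix.diagonal_pow, hfun]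
  have hcard : ∀ l : Fin N, (Finset.univ.erase l).card = N - 1 := by
    intro l
    rw [Finset.card_erase_of_mem (Finset.mem_univ l), Finset.card_univ, Fintype.card_fin]
  constructor
  · ext l j
    rw [hD, Matrix.mul_diagonal]
    show (∏ k ∈ Finset.univ.erase l,
        Complex.sin ((Real.pi : ℂ) * ((a + 1) / N + (σ' j + hvec N m j) - σ k)) /
          Complex.sin ((Real.pi : ℂ) * (σ k - σ l))) = _
    by_cases hj : j = m
    · have harg : ∀ k : Fin N,
          (Real.pi : ℂ) * ((a + 1) / N + (σ' j + hvec N m j) - σ k)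
            = (Real.pi : ℂ) * ((a - 1 + 1) / N + σ' j - σ k) + Real.pi := by
        intro k; simp only [hvec, if_pos hj]; ring
      simp only [harg, Complex.sin_add_pi]
      rw [prod_neg_div, hcard l]
      simp [Fmat, hj, mul_comm]
    · have harg : ∀ k : Fin N,
          (Real.pi : ℂ) * ((a + 1) / N + (σ' j + hvec N m j) - σ k)
            = (Real.pi : ℂ) * ((a - 1 + 1) / N + σ' j - σ k) := by
        intro k; simp only [hvec, if_neg hj]; ring
      simp only [harg]
      simp [Fmat, hj]
  · ext l j
    rw [hD, Matrix.mul_diagonal]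
    show (∏ k ∈ Finset.univ.erase l,
        Complex.sin ((Real.pi : ℂ) * ((a + 1) / N + (σ' j - hvec N m j) - σ k)) /
          Complex.sin ((Real.pi : ℂ) * (σ k - σ l))) = _
    by_cases hj : j = m
    · have harg : ∀ k : Fin N,
          (Real.pi : ℂ) * ((a + 1) / N + (σ' j - hvec N m j) - σ k)
            = (Real.pi : ℂ) * ((a + 1 + 1) / N + σ' j - σ k) - Real.pi := by
        intro k; simp only [hvec, if_pos hj]; ring
      simp only [harg, Complex.sin_sub_pi]
      rw [prod_neg_div, hcard l]
      simp [Fmat, hj, mul_comm]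
    · have harg : ∀ k : Fin N,
          (Real.pi : ℂ) * ((a + 1) / N + (σ' j - hvec N m j) - σ k)
            = (Real.pi : ℂ) * ((a + 1 + 1) / N + σ' j - σ k) := by
        intro k; simp only [hvec, if_neg hj]; ring
      simp only [harg]
      simp [Fmat, hj]
end

section
/- Let $\boldsymbol\theta_0, \boldsymbol\theta_\infty \in \mathbb{C}^N$ satisfy, for every integer $k\ge 1$, $\sum_{\alpha=1}^N [\theta_\infty^{(\alpha)}]_k - k\,[\tfrac{\boldsymbol\theta_\infty^2 - \boldsymbol\theta_0^2 - 1}{2}]_{k-1} - \sum_{\alpha=1}^N [\theta_0^{(\alpha)}]_k = 0$, where $\boldsymbol\theta^2 = \sum_\alpha (\theta^{(\alpha)})^2$. Then there exist indices $\alpha', \alpha''$ with $\theta_\infty^{(\alpha'')} = \theta_0^{(\alpha')} + 1$ and the multisets $\{\theta_\infty^{(\alpha)} : \alpha \ne \alpha''\}$ and $\{\theta_0^{(\alpha)} : \alpha \ne \alpha'\}$ coincide. -/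
noncomputable def fall (x : ℂ) (k : ℕ) : ℂ := ∏ i ∈ Finset.range k, (x - i)

open Polynomial

noncomputable def fallPoly (k : ℕ) : Polynomial ℂ :=
  ∏ i ∈ Finset.range k, (X - C (i : ℂ))

lemma fallPoly_eval (x : ℂ) (k : ℕ) : (fallPoly k).eval x = fall x k := by
  simp [fallPoly, fall, eval_prod]

lemma fallPoly_monic (k : ℕ) : (fallPoly k).Monic :=
  monic_prod_of_monic _ _ (fun i _ => monic_X_sub_C _)

lemma fallPoly_natDegree (k : ℕ) : (fallPoly k).natDegree = k := by
  rw [fallPoly, natDegree_prod]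
  · simp only [natDegree_X_sub_C]
    simp
  · intro i _; exact X_sub_C_ne_zero _

lemma sum_eval_eq (Xs Ys : Multiset ℂ)
    (h : ∀ k, (Xs.map (fall · k)).sum = (Ys.map (fall · k)).sum) :
    ∀ p : Polynomial ℂ, (Xs.map p.eval).sum = (Ys.map p.eval).sum := by
  have hcard : (Multiset.card Xs : ℂ) = (Multiset.card Ys : ℂ) := by
    simpa [fall] using h 0
  suffices H : ∀ n, ∀ p : Polynomial ℂ, p.natDegree ≤ n →
      (Xs.map p.eval).sum = (Ys.map p.eval).sum by
    intro p; exact H p.natDegree p le_rfl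
  intro n
  induction n with
  | zero =>
    intro p hp
    rw [Polynomial.eq_C_of_natDegree_le_zero hp]
    simp only [eval_C]
    rw [Multiset.map_const', Multiset.map_const', Multiset.sum_replicate,
      Multiset.sum_replicate, nsmul_eq_mul, nsmul_eq_mul, hcard]
  | succ n ih =>
    intro p hp
    by_cases hp0 : p = 0
    · simp [hp0]
    set d := p.natDegree with hd
    set r : Polynomial ℂ := p - C p.leadingCoeff * fallPoly d with hr
    have hpeq : ∀ x : ℂ, p.eval x = p.leadingCoeff * fall x d + r.eval x := by
      intro x
      simp [hr, fallPoly_eval]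
    have hsplit : ∀ Z : Multiset ℂ,
        (Z.map p.eval).sum = p.leadingCoeff * (Z.map (fall · d)).sum + (Z.map r.eval).sum := by
      intro Z
      rw [← Multiset.sum_map_mul_left, ← Multiset.sum_map_add]
      exact congrArg _ (Multiset.map_congr rfl (fun x _ => hpeq x))
    have hrsum : (Xs.map r.eval).sum = (Ys.map r.eval).sum := by
      by_cases hr0 : r = 0
      · simp [hr0]
      · have hdeg : r.degree < p.degree := by
          apply degree_sub_lt _ hp0
          · rw [leadingCoeff_mul, leadingCoeff_C, (fallPoly_monic d).leadingCoeff, mul_one]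
          · rw [degree_mul, degree_C (leadingCoeff_ne_zero.mpr hp0)]
            rw [degree_eq_natDegree ((fallPoly_monic d).ne_zero), fallPoly_natDegree,
              degree_eq_natDegree hp0]
            simp [hd]
        have hlt : r.natDegree < p.natDegree := natDegree_lt_natDegree hr0 hdeg
        exact ih r (Nat.lt_succ_iff.mp (lt_of_lt_of_le hlt hp))
    rw [hsplit Xs, hsplit Ys, h d, hrsum]

lemma count_as_sum (Z : Multiset ℂ) (f : ℂ → ℂ) (a : ℂ)
    (hf : ∀ x ∈ Z, f x = if x = a then 1 else 0) :
    (Z.map f).sum = (Z.count a : ℂ) := by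
  induction Z using Multiset.induction with
  | empty => simp
  | cons x Z ih =>
    simp only [Multiset.map_cons, Multiset.sum_cons, Multiset.count_cons]
    rw [hf x (Multiset.mem_cons_self _ _), ih (fun y hy => hf y (Multiset.mem_cons_of_mem hy))]
    push_cast
    by_cases hx : x = a
    · subst hx; simp [add_comm]
    · simp [hx, Ne.symm hx]

lemma multiset_eq_of_sum_eval (Xs Ys : Multiset ℂ)
    (h : ∀ p : Polynomial ℂ, (Xs.map p.eval).sum = (Ys.map p.eval).sum) :
    Xs = Ys := by
  ext a
  by_cases ha : a ∈ Xs + Ys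
  · set S := (Xs + Ys).toFinset with hS
    have haS : a ∈ S := Multiset.mem_toFinset.mpr ha
    set p : Polynomial ℂ := ∏ b ∈ S.erase a, (C (a - b)⁻¹ * (X - C b)) with hp
    have hev : ∀ x ∈ S, p.eval x = if x = a then 1 else 0 := by
      intro x hx
      by_cases hxa : x = a
      · subst hxa
        simp only [hp, eval_prod, eval_mul, eval_C, eval_sub, eval_X, if_pos rfl]
        apply Finset.prod_eq_one
        intro b hb
        have : x - b ≠ 0 := sub_ne_zero.mpr (Ne.symm (Finset.ne_of_mem_erase hb))
        field_simp
      · rw [if_neg hxa]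
        simp only [hp, eval_prod, eval_mul, eval_C, eval_sub, eval_X]
        apply Finset.prod_eq_zero (Finset.mem_erase.mpr ⟨hxa, hx⟩)
        simp
    have hcount : ∀ Z : Multiset ℂ, Z ≤ Xs + Ys → (Z.map p.eval).sum = (Z.count a : ℂ) := by
      intro Z hZ
      apply count_as_sum
      intro x hx
      exact hev x (Multiset.mem_toFinset.mpr (Multiset.mem_of_le hZ hx))
    have := h p
    rw [hcount Xs (Multiset.le_add_right _ _), hcount Ys (Multiset.le_add_left _ _)] at this
    exact_mod_cast this
  · rw [Multiset.mem_add] at ha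
    push_neg at ha
    rw [Multiset.count_eq_zero_of_notMem ha.1, Multiset.count_eq_zero_of_notMem ha.2]

lemma fall_succ_shift (x : ℂ) (m : ℕ) :
    fall (x + 1) (m + 1) - fall x (m + 1) = (m + 1 : ℂ) * fall x m := by
  have h1 : fall (x + 1) (m + 1) = fall x m * (x + 1) := by
    rw [fall, Finset.prod_range_succ']
    simp only [Nat.cast_zero, sub_zero]
    congr 1
    apply Finset.prod_congr rfl
    intro i _
    push_cast
    ring
  have h2 : fall x (m + 1) = fall x m * (x - m) := Finset.prod_range_succ _ _
  rw [h1, h2]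
  ring

theorem stmt13 {N : ℕ} (θ0 θinf : Fin N → ℂ)
    (h : ∀ k : ℕ, 1 ≤ k →
      ∑ α, fall (θinf α) k -
          (k : ℂ) * fall ((∑ α, (θinf α) ^ 2 - ∑ α, (θ0 α) ^ 2 - 1) / 2) (k - 1) -
        ∑ α, fall (θ0 α) k = 0) :
    ∃ α'' α' : Fin N, θinf α'' = θ0 α' + 1 ∧
      Multiset.map θinf (Finset.univ.erase α'').val =
        Multiset.map θ0 (Finset.univ.erase α').val := by
  set x0 : ℂ := (∑ α, (θinf α) ^ 2 - ∑ α, (θ0 α) ^ 2 - 1) / 2 with hx0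
  set Xs : Multiset ℂ := x0 ::ₘ Multiset.map θinf Finset.univ.val with hXs
  set Ys : Multiset ℂ := (x0 + 1) ::ₘ Multiset.map θ0 Finset.univ.val with hYs
  have hsum : ∀ (f : Fin N → ℂ) (k : ℕ),
      ((Multiset.map f Finset.univ.val).map (fall · k)).sum = ∑ α, fall (f α) k := by
    intro f k
    rw [Multiset.map_map]
    rfl
  have hfall : ∀ k, (Xs.map (fall · k)).sum = (Ys.map (fall · k)).sum := by
    intro k
    cases k with
    | zero =>
      have hz : ∀ Z : Multiset ℂ, (Z.map (fall · 0)).sum = (Multiset.card Z : ℂ) := by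
        intro Z; simp [fall]
      rw [hz, hz]
      simp [hXs, hYs]
    | succ m =>
      have hm := h (m + 1) (Nat.le_add_left 1 m)
      simp only [Nat.add_sub_cancel] at hm
      rw [hXs, hYs, Multiset.map_cons, Multiset.map_cons, Multiset.sum_cons, Multiset.sum_cons,
        hsum, hsum]
      push_cast at hm ⊢
      linear_combination hm - fall_succ_shift x0 m
  have hXY : Xs = Ys := multiset_eq_of_sum_eval _ _ (sum_eval_eq _ _ hfall)
  have hmem1 : x0 + 1 ∈ Xs := hXY ▸ Multiset.mem_cons_self _ _
  have hmem2 : x0 ∈ Ys := hXY ▸ Multiset.mem_cons_self x0 _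
  rw [hXs, Multiset.mem_cons] at hmem1
  rw [hYs, Multiset.mem_cons] at hmem2
  have hne : x0 + 1 ≠ x0 := by
    intro hcontr
    have : (1 : ℂ) = 0 := by linear_combination hcontr
    simp at this
  obtain ⟨α'', _, hα''⟩ := Multiset.mem_map.mp (hmem1.resolve_left hne)
  obtain ⟨α', _, hα'⟩ := Multiset.mem_map.mp (hmem2.resolve_left (Ne.symm hne))
  refine ⟨α'', α', by rw [hα'', hα'], ?_⟩
  have hAe : Multiset.map θinf Finset.univ.val
      = θinf α'' ::ₘ Multiset.map θinf (Finset.univ.erase α'').val := by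
    rw [Finset.erase_val, ← Multiset.map_cons,
      Multiset.cons_erase (Finset.mem_univ α'' |> Finset.mem_def.mp)]
  have hBe : Multiset.map θ0 Finset.univ.val
      = θ0 α' ::ₘ Multiset.map θ0 (Finset.univ.erase α').val := by
    rw [Finset.erase_val, ← Multiset.map_cons,
      Multiset.cons_erase (Finset.mem_univ α' |> Finset.mem_def.mp)]
  rw [hXs, hYs, hAe, hBe, hα'', hα'] at hXY
  rw [Multiset.cons_swap] at hXY
  exact (Multiset.cons_inj_right _).mp ((Multiset.cons_inj_right _).mp hXY)
end

section
/- Let $\hat\sigma^{(s)} = \sigma'^{(s)} + a/N$ and assume all quantities $\sigma^{(k)} - \sigma^{(l)}$ ($k\ne l$), $\hat\sigma^{(k)} - \hat\sigma^{(l)}$ ($k\ne l$), and $\hat\sigma^{(m)} - \sigma^{(s)}$ are not integers. Define $F_{lj} = \prod_{k\ne l}\frac{\sin\pi(a/N + \sigma'^{(j)} - \sigma^{(k)})}{\sin\pi(\sigma^{(k)}-\sigma^{(l)})}$ (i.e. $F(\boldsymbol\sigma', a-1, \boldsymbol\sigma)$), $W_{kl} = \prod_{s\ne l}\frac{e^{2\pi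 i(\sigma^{(k)} - a/N)} - e^{2\pi i \sigma'^{(s)}}}{e^{2\pi i \sigma'^{(l)}} - e^{2\pi i \sigma'^{(s)}}}$, and diagonal matrices $X = \mathrm{diag}(x^{(s)})$, $Y = \mathrm{diag}(y^{(s)})$ with $(x^{(s)})^{-1} = e^{i\pi(N-1)\sigma^{(s)}}\prod_{m}\sin\pi(\hat\sigma^{(m)} - \sigma^{(s)})\prod_{m\ne s}\sin\pi(\sigma^{(m)}-\sigma^{(s)})$ and $(y^{(s)})^{-1} = e^{i\pi(N-1)\hat\sigma^{(s)}}\prod_m \sin\pi(\hat\sigma^{(s)}-\sigma^{(m)})\prod_{m\ne s}\sin\pi(\hat\sigma^{(m)}-\hat\sigma^{(s)})$. Then $F = X\, W\, Y^{-1}$. -/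
open Finset Complex

lemma sin_pi_ne {z : ℂ} (h : ∀ n : ℤ, z ≠ (n:ℂ)) : Complex.sin ((Real.pi:ℂ) * z) ≠ 0 := by
  intro h0
  rcases Complex.sin_eq_zero_iff.mp h0 with ⟨k, hk⟩
  have hπ : (Real.pi:ℂ) ≠ 0 := Complex.ofReal_ne_zero.mpr Real.pi_ne_zero
  have h2 : (Real.pi:ℂ) * z = (Real.pi:ℂ) * (k:ℂ) := by rw [hk]; ring
  exact h k (mul_left_cancel₀ hπ h2)

lemma exp_sub_exp (u v : ℂ) :
    Complex.exp (2*(Real.pi:ℂ)*Complex.I*u) - Complex.exp (2*(Real.pi:ℂ)*Complex.I*v)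
      = Complex.exp ((Real.pi:ℂ)*Complex.I*(u+v)) * (2*Complex.I) * Complex.sin ((Real.pi:ℂ)*(u-v)) := by
  have ha : Complex.exp ((Real.pi:ℂ)*Complex.I*(u+v)) * Complex.exp (((Real.pi:ℂ)*(u-v))*Complex.I)
      = Complex.exp (2*(Real.pi:ℂ)*Complex.I*u) := by
    rw [← Complex.exp_add]; ring_nf
  have hb : Complex.exp ((Real.pi:ℂ)*Complex.I*(u+v)) * Complex.exp ((-((Real.pi:ℂ)*(u-v)))*Complex.I)
      = Complex.exp (2*(Real.pi:ℂ)*Complex.I*v) := by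
    rw [← Complex.exp_add]; ring_nf
  rw [Complex.sin]
  linear_combination (-1 : ℂ) * ha + hb + (Complex.exp ((Real.pi:ℂ)*Complex.I*(u+v)) * Complex.exp (((Real.pi:ℂ)*(u-v))*Complex.I) - Complex.exp ((Real.pi:ℂ)*Complex.I*(u+v)) * Complex.exp ((-((Real.pi:ℂ)*(u-v)))*Complex.I)) * Complex.I_mul_I

lemma stmt18_entry {N : ℕ} (σ σ' : Fin N → ℂ) (a : ℂ)
    (h1 : ∀ k l : Fin N, k ≠ l → ∀ m : ℤ, σ k - σ l ≠ (m : ℂ))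
    (h2 : ∀ k l : Fin N, k ≠ l → ∀ m : ℤ,
      (σ' k + a / N) - (σ' l + a / N) ≠ (m : ℂ))
    (h3 : ∀ m s : Fin N, ∀ n : ℤ, (σ' m + a / N) - σ s ≠ (n : ℂ))
    (l j : Fin N) :
    (∏ k ∈ univ.erase l,
          Complex.sin ((Real.pi : ℂ) * (a / N + σ' j - σ k)) /
            Complex.sin ((Real.pi : ℂ) * (σ k - σ l)))
    = (Complex.exp ((Real.pi : ℂ) * Complex.I * (N - 1) * σ l) *
            (∏ m : Fin N, Complex.sin ((Real.pi : ℂ) * ((σ' m + a / N) - σ l))) *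
            ∏ m ∈ univ.erase l, Complex.sin ((Real.pi : ℂ) * (σ m - σ l)))⁻¹ *
      (∏ s ∈ univ.erase j,
            (Complex.exp (2 * (Real.pi : ℂ) * Complex.I * (σ l - a / N)) -
                Complex.exp (2 * (Real.pi : ℂ) * Complex.I * σ' s)) /
              (Complex.exp (2 * (Real.pi : ℂ) * Complex.I * σ' j) -
                Complex.exp (2 * (Real.pi : ℂ) * Complex.I * σ' s))) *
      (Complex.exp ((Real.pi : ℂ) * Complex.I * (N - 1) * (σ' j + a / N)) *
            (∏ m : Fin N, Complex.sin ((Real.pi : ℂ) * ((σ' j + a / N) - σ m))) *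
            ∏ m ∈ univ.erase j,
              Complex.sin ((Real.pi : ℂ) * ((σ' m + a / N) - (σ' j + a / N)))) := by
  set c : ℂ := (Real.pi : ℂ) with hc
  have hN : 0 < N := l.pos
  have hcast : ((N - 1 : ℕ) : ℂ) = (N : ℂ) - 1 := by
    push_cast [Nat.cast_sub hN]
    ring
  -- Step A : LHS
  have hA : (∏ k ∈ univ.erase l,
        Complex.sin (c * (a / N + σ' j - σ k)) / Complex.sin (c * (σ k - σ l)))
      = (∏ k ∈ univ.erase l, Complex.sin (c * ((σ' j + a / N) - σ k)))
        / (∏ k ∈ univ.erase l, Complex.sin (c * (σ k - σ l))) := by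
    rw [← Finset.prod_div_distrib]
    refine Finset.prod_congr rfl fun k _ => ?_
    congr 2
    ring
  -- Step B : W entry
  have hfac : ∀ s ∈ univ.erase j,
      (Complex.exp (2 * c * Complex.I * (σ l - a / N)) -
          Complex.exp (2 * c * Complex.I * σ' s)) /
        (Complex.exp (2 * c * Complex.I * σ' j) -
          Complex.exp (2 * c * Complex.I * σ' s))
      = Complex.exp (c * Complex.I * (σ l - a / N - σ' j)) *
          (Complex.sin (c * ((σ l - a / N) - σ' s)) /
            Complex.sin (c * ((σ' j + a / N) - (σ' s + a / N)))) := by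
    intro s hs
    have hsj : j ≠ s := fun h => (Finset.ne_of_mem_erase hs) h.symm
    have hS2 : Complex.sin (c * ((σ' j + a / N) - (σ' s + a / N))) ≠ 0 :=
      sin_pi_ne (h2 j s hsj)
    have harg : c * (σ' j - σ' s) = c * ((σ' j + a / N) - (σ' s + a / N)) := by ring
    rw [exp_sub_exp (σ l - a / N) (σ' s), exp_sub_exp (σ' j) (σ' s), harg]
    have hE : Complex.exp (c * Complex.I * (σ l - a / N + σ' s))
        = Complex.exp (c * Complex.I * (σ l - a / N - σ' j)) *
          Complex.exp (c * Complex.I * (σ' j + σ' s)) := by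
      rw [← Complex.exp_add]; ring_nf
    rw [hE]
    have h2I : (2 * Complex.I : ℂ) ≠ 0 := by simp [Complex.I_ne_zero]
    have hden : Complex.exp (c * Complex.I * (σ' j + σ' s)) * (2 * Complex.I) *
        Complex.sin (c * ((σ' j + a / N) - (σ' s + a / N))) ≠ 0 :=
      mul_ne_zero (mul_ne_zero (Complex.exp_ne_zero _) h2I) hS2
    rw [← mul_div_assoc, div_eq_div_iff hden hS2]
    ring
  have hcard : (univ.erase j).card = N - 1 := by
    rw [Finset.card_erase_of_mem (Finset.mem_univ j), Finset.card_univ, Fintype.card_fin]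
  have hW : (∏ s ∈ univ.erase j,
        (Complex.exp (2 * c * Complex.I * (σ l - a / N)) -
            Complex.exp (2 * c * Complex.I * σ' s)) /
          (Complex.exp (2 * c * Complex.I * σ' j) -
            Complex.exp (2 * c * Complex.I * σ' s)))
      = Complex.exp (c * Complex.I * (σ l - a / N - σ' j)) ^ (N - 1) *
        ((∏ s ∈ univ.erase j, Complex.sin (c * ((σ l - a / N) - σ' s))) /
          (∏ s ∈ univ.erase j, Complex.sin (c * ((σ' j + a / N) - (σ' s + a / N))))) := by
    rw [Finset.prod_congr rfl hfac, Finset.prod_mul_distrib, Finset.prod_const, hcard,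
      Finset.prod_div_distrib]
  -- sign-pairing relation
  have hPT : (∏ s ∈ univ.erase j, Complex.sin (c * ((σ l - a / N) - σ' s))) *
        (∏ m ∈ univ.erase j, Complex.sin (c * ((σ' m + a / N) - (σ' j + a / N)))) *
        Complex.sin (c * ((σ' j + a / N) - σ l))
      = (∏ m : Fin N, Complex.sin (c * ((σ' m + a / N) - σ l))) *
        (∏ s ∈ univ.erase j, Complex.sin (c * ((σ' j + a / N) - (σ' s + a / N)))) := by
    have hstep : ∀ s ∈ univ.erase j,
        Complex.sin (c * ((σ l - a / N) - σ' s)) *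
          Complex.sin (c * ((σ' s + a / N) - (σ' j + a / N)))
        = Complex.sin (c * ((σ' s + a / N) - σ l)) *
          Complex.sin (c * ((σ' j + a / N) - (σ' s + a / N))) := by
      intro s _
      have e1 : c * ((σ l - a / N) - σ' s) = -(c * ((σ' s + a / N) - σ l)) := by ring
      have e2 : c * ((σ' s + a / N) - (σ' j + a / N))
          = -(c * ((σ' j + a / N) - (σ' s + a / N))) := by ring
      rw [e1, e2, Complex.sin_neg, Complex.sin_neg]
      ring
    calc (∏ s ∈ univ.erase j, Complex.sin (c * ((σ l - a / N) - σ' s))) *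
          (∏ m ∈ univ.erase j, Complex.sin (c * ((σ' m + a / N) - (σ' j + a / N)))) *
          Complex.sin (c * ((σ' j + a / N) - σ l))
        = (∏ s ∈ univ.erase j, Complex.sin (c * ((σ l - a / N) - σ' s)) *
            Complex.sin (c * ((σ' s + a / N) - (σ' j + a / N)))) *
          Complex.sin (c * ((σ' j + a / N) - σ l)) := by
          rw [Finset.prod_mul_distrib]
      _ = (∏ s ∈ univ.erase j, Complex.sin (c * ((σ' s + a / N) - σ l)) *
            Complex.sin (c * ((σ' j + a / N) - (σ' s + a / N)))) *
          Complex.sin (c * ((σ' j + a / N) - σ l)) := by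
          rw [Finset.prod_congr rfl hstep]
      _ = Complex.sin (c * ((σ' j + a / N) - σ l)) *
            (∏ s ∈ univ.erase j, Complex.sin (c * ((σ' s + a / N) - σ l))) *
          (∏ s ∈ univ.erase j, Complex.sin (c * ((σ' j + a / N) - (σ' s + a / N)))) := by
          rw [Finset.prod_mul_distrib]; ring
      _ = (∏ m : Fin N, Complex.sin (c * ((σ' m + a / N) - σ l))) *
          (∏ s ∈ univ.erase j, Complex.sin (c * ((σ' j + a / N) - (σ' s + a / N)))) := by
          rw [Finset.mul_prod_erase univ (fun m => Complex.sin (c * ((σ' m + a / N) - σ l)))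
            (Finset.mem_univ j)]
  -- exponential relation
  have hEE : Complex.exp (c * Complex.I * (σ l - a / N - σ' j)) ^ (N - 1) *
        Complex.exp (c * Complex.I * (N - 1) * (σ' j + a / N))
      = Complex.exp (c * Complex.I * (N - 1) * σ l) := by
    have p1 : Complex.exp (c * Complex.I * (N - 1) * σ l)
        = Complex.exp (c * Complex.I * σ l) ^ (N - 1) := by
      rw [← Complex.exp_nat_mul]
      congr 1
      rw [hcast]; ring
    have p2 : Complex.exp (c * Complex.I * (N - 1) * (σ' j + a / N))
        = Complex.exp (c * Complex.I * (σ' j + a / N)) ^ (N - 1) := by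
      rw [← Complex.exp_nat_mul]
      congr 1
      rw [hcast]; ring
    rw [p1, p2, ← mul_pow, ← Complex.exp_add]
    congr 2
    ring
  -- split the full product R
  have hR : (∏ m : Fin N, Complex.sin (c * ((σ' j + a / N) - σ m)))
      = Complex.sin (c * ((σ' j + a / N) - σ l)) *
        ∏ m ∈ univ.erase l, Complex.sin (c * ((σ' j + a / N) - σ m)) :=
    (Finset.mul_prod_erase univ (fun m => Complex.sin (c * ((σ' j + a / N) - σ m)))
      (Finset.mem_univ l)).symm
  -- nonvanishing
  have hBne : (∏ k ∈ univ.erase l, Complex.sin (c * (σ k - σ l))) ≠ 0 :=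
    Finset.prod_ne_zero_iff.mpr fun k hk => sin_pi_ne (h1 k l (Finset.ne_of_mem_erase hk))
  have hMne : (∏ m : Fin N, Complex.sin (c * ((σ' m + a / N) - σ l))) ≠ 0 :=
    Finset.prod_ne_zero_iff.mpr fun m _ => sin_pi_ne (h3 m l)
  have hDne : (∏ s ∈ univ.erase j, Complex.sin (c * ((σ' j + a / N) - (σ' s + a / N)))) ≠ 0 :=
    Finset.prod_ne_zero_iff.mpr fun s hs =>
      sin_pi_ne (h2 j s fun h => (Finset.ne_of_mem_erase hs) h.symm)
  have hE1ne : Complex.exp (c * Complex.I * (N - 1) * σ l) ≠ 0 := Complex.exp_ne_zero _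
  -- assemble
  rw [hA, hW, hR]
  set A := ∏ k ∈ univ.erase l, Complex.sin (c * ((σ' j + a / N) - σ k)) with hAdef
  set B := ∏ k ∈ univ.erase l, Complex.sin (c * (σ k - σ l)) with hBdef
  set M := ∏ m : Fin N, Complex.sin (c * ((σ' m + a / N) - σ l)) with hMdef
  set D := ∏ s ∈ univ.erase j, Complex.sin (c * ((σ' j + a / N) - (σ' s + a / N))) with hDdef
  set P := ∏ s ∈ univ.erase j, Complex.sin (c * ((σ l - a / N) - σ' s)) with hPdef
  set T := ∏ m ∈ univ.erase j, Complex.sin (c * ((σ' m + a / N) - (σ' j + a / N))) with hTdef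
  set G := Complex.sin (c * ((σ' j + a / N) - σ l)) with hGdef
  set E1 := Complex.exp (c * Complex.I * (N - 1) * σ l) with hE1def
  set Ep := Complex.exp (c * Complex.I * (σ l - a / N - σ' j)) ^ (N - 1) with hEpdef
  set E2 := Complex.exp (c * Complex.I * (N - 1) * (σ' j + a / N)) with hE2def
  have final : (E1 * M * B)⁻¹ * (Ep * (P / D)) * (E2 * (G * A) * T) = A / B := by
    calc (E1 * M * B)⁻¹ * (Ep * (P / D)) * (E2 * (G * A) * T)
        = (E1 * M * B)⁻¹ * ((Ep * E2) * ((P * T * G) / D) * A) := by ring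
      _ = (E1 * M * B)⁻¹ * (E1 * ((M * D) / D) * A) := by rw [hEE, hPT]
      _ = (E1 * M * B)⁻¹ * (E1 * M * A) := by rw [mul_div_cancel_right₀ M hDne]
      _ = A / B := by
          field_simp
  rw [final]

/-- factorization `F = X W Y⁻¹` of the trigonometric fusion matrix
`F(σ', a-1, σ)` through the exponential Vandermonde-ratio matrix `W`,
with explicit diagonal matrices `X`, `Y`; here `σ̂_s = σ'_s + a/N`. -/
theorem stmt18 {N : ℕ} (σ σ' : Fin N → ℂ) (a : ℂ)
    (h1 : ∀ k l : Fin N, k ≠ l → ∀ m : ℤ, σ k - σ l ≠ (m : ℂ))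
    (h2 : ∀ k l : Fin N, k ≠ l → ∀ m : ℤ,
      (σ' k + a / N) - (σ' l + a / N) ≠ (m : ℂ))
    (h3 : ∀ m s : Fin N, ∀ n : ℤ, (σ' m + a / N) - σ s ≠ (n : ℂ)) :
    (Matrix.of fun l j : Fin N =>
        ∏ k ∈ univ.erase l,
          Complex.sin ((Real.pi : ℂ) * (a / N + σ' j - σ k)) /
            Complex.sin ((Real.pi : ℂ) * (σ k - σ l))) =
      Matrix.diagonal (fun s : Fin N =>
          (Complex.exp ((Real.pi : ℂ) * Complex.I * (N - 1) * σ s) *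
            (∏ m : Fin N, Complex.sin ((Real.pi : ℂ) * ((σ' m + a / N) - σ s))) *
            ∏ m ∈ univ.erase s, Complex.sin ((Real.pi : ℂ) * (σ m - σ s)))⁻¹) *
        (Matrix.of fun k l : Fin N =>
          ∏ s ∈ univ.erase l,
            (Complex.exp (2 * (Real.pi : ℂ) * Complex.I * (σ k - a / N)) -
                Complex.exp (2 * (Real.pi : ℂ) * Complex.I * σ' s)) /
              (Complex.exp (2 * (Real.pi : ℂ) * Complex.I * σ' l) -
                Complex.exp (2 * (Real.pi : ℂ) * Complex.I * σ' s))) *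
        (Matrix.diagonal (fun s : Fin N =>
          (Complex.exp ((Real.pi : ℂ) * Complex.I * (N - 1) * (σ' s + a / N)) *
            (∏ m : Fin N, Complex.sin ((Real.pi : ℂ) * ((σ' s + a / N) - σ m))) *
            ∏ m ∈ univ.erase s,
              Complex.sin ((Real.pi : ℂ) * ((σ' m + a / N) - (σ' s + a / N))))⁻¹))⁻¹ := by
  have hQ : ∀ s : Fin N,
      Complex.exp ((Real.pi : ℂ) * Complex.I * (N - 1) * (σ' s + a / N)) *
        (∏ m : Fin N, Complex.sin ((Real.pi : ℂ) * ((σ' s + a / N) - σ m))) *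
        (∏ m ∈ univ.erase s,
          Complex.sin ((Real.pi : ℂ) * ((σ' m + a / N) - (σ' s + a / N)))) ≠ 0 := by
    intro s
    refine mul_ne_zero (mul_ne_zero (Complex.exp_ne_zero _) ?_) ?_
    · exact Finset.prod_ne_zero_iff.mpr fun m _ => sin_pi_ne (h3 s m)
    · exact Finset.prod_ne_zero_iff.mpr fun m hm => sin_pi_ne (h2 m s (Finset.ne_of_mem_erase hm))
  have hinv : (Matrix.diagonal (fun s : Fin N =>
      (Complex.exp ((Real.pi : ℂ) * Complex.I * (N - 1) * (σ' s + a / N)) *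
        (∏ m : Fin N, Complex.sin ((Real.pi : ℂ) * ((σ' s + a / N) - σ m))) *
        ∏ m ∈ univ.erase s,
          Complex.sin ((Real.pi : ℂ) * ((σ' m + a / N) - (σ' s + a / N))))⁻¹))⁻¹
    = Matrix.diagonal (fun s : Fin N =>
      Complex.exp ((Real.pi : ℂ) * Complex.I * (N - 1) * (σ' s + a / N)) *
        (∏ m : Fin N, Complex.sin ((Real.pi : ℂ) * ((σ' s + a / N) - σ m))) *
        ∏ m ∈ univ.erase s,
          Complex.sin ((Real.pi : ℂ) * ((σ' m + a / N) - (σ' s + a / N)))) := by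
    apply Matrix.inv_eq_right_inv
    rw [Matrix.diagonal_mul_diagonal]
    rw [show (fun s : Fin N => _) = fun _ : Fin N => (1:ℂ) from funext fun s => inv_mul_cancel₀ (hQ s)]
    exact Matrix.diagonal_one
  rw [hinv]
  ext l j
  rw [Matrix.mul_diagonal, Matrix.diagonal_mul, Matrix.of_apply, Matrix.of_apply]
  exact stmt18_entry σ σ' a h1 h2 h3 l j
end
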